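/- Let H be a complex Hilbert space, T a bounded self-adjoint operator on H, and a a bounded operator on H. Write R_λ = (1 + λ² + T²)⁻¹ for λ ≥ 0 and F = f(T), the continuous functional calculus of f(x) = x/√(1 + x²) applied to T. Then the map λ ↦ R_λ ∘ ((1 + λ²)(T∘a − a∘T) + T∘(a∘T − T∘a)∘T) ∘ R_λ is Bochner integrable on [0, ∞), and F∘a − a∘F = (2/π) · ∫₀^∞ R_λ ∘ ((1 + λ²)(T∘a − a∘T) + T∘(a∘T − T∘a)∘T) ∘ R_λ dλ. -/

import Mathlib

open MeasureTheory

/-- The resolvent `(1 + l² + T²)⁻¹` of a bounded operator `T` on a complex Hilbert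
space (via `Ring.inverse`, which gives the honest inverse when it exists). -/
noncomputable def resolvent3 {H : Type*} [NormedAddCommGroup H] [InnerProductSpace ℂ H]
    [CompleteSpace H] (T : H →L[ℂ] H) (l : ℝ) : H →L[ℂ] H :=
  Ring.inverse (((1 + l ^ 2 : ℝ) : ℂ) • (1 : H →L[ℂ] H) + T ^ 2)

section Aux

open Set Real

lemma stmt3_scalar {c : ℝ} (hc : 0 < c) :
    ∫ l in Ici (0:ℝ), (c^2 + l^2)⁻¹ = π/(2*c) := by
  rw [MeasureTheory.integral_Ici_eq_integral_Ioi]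
  have h1 : ∀ l : ℝ, (c^2 + l^2)⁻¹ = (c⁻¹)^2 * (1 + (c⁻¹ * l)^2)⁻¹ := by
    intro l
    have hc' : c ≠ 0 := ne_of_gt hc
    field_simp
  simp_rw [h1]
  rw [MeasureTheory.integral_const_mul,
    integral_comp_mul_left_Ioi (fun u => (1+u^2)⁻¹) 0 (inv_pos.2 hc)]
  simp only [mul_zero, integral_Ioi_inv_one_add_sq, Real.arctan_zero, sub_zero, smul_eq_mul,
    inv_inv]
  have hc' : c ≠ 0 := ne_of_gt hc
  field_simp

variable {H : Type*} [NormedAddCommGroup H] [InnerProductSpace ℂ H] [CompleteSpace H]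

/-- The two-variable function `(l, x) ↦ (1 + l² + x²)⁻¹` as a continuous map. -/
noncomputable def stmt3_bigG (T : H →L[ℂ] H) : C(ℝ × spectrum ℝ T, ℝ) :=
  ⟨fun p => (1 + p.1 ^ 2 + (p.2 : ℝ) ^ 2)⁻¹, by
    apply Continuous.inv₀ (by fun_prop)
    intro p; positivity⟩

/-- The family of functions `x ↦ (1 + l² + x²)⁻¹` on the spectrum of `T`. -/
noncomputable def stmt3_gC (T : H →L[ℂ] H) : ℝ → C(spectrum ℝ T, ℝ) :=
  fun l => (stmt3_bigG T).curry l

variable (T : H →L[ℂ] H)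

lemma stmt3_gC_apply (l : ℝ) (x : spectrum ℝ T) :
    stmt3_gC T l x = (1 + l ^ 2 + (x:ℝ) ^ 2)⁻¹ := rfl

lemma stmt3_gC_norm (l : ℝ) : ‖stmt3_gC T l‖ ≤ (1+l^2)⁻¹ := by
  rw [ContinuousMap.norm_le _ (by positivity)]
  intro x
  rw [stmt3_gC_apply, Real.norm_eq_abs, abs_of_pos (by positivity)]
  exact inv_anti₀ (by positivity) (by nlinarith [sq_nonneg (x:ℝ)])

lemma stmt3_gC_int : IntegrableOn (stmt3_gC T) (Ici 0) volume := by
  apply Integrable.mono' ((integrable_inv_one_add_sq).integrableOn (s := Ici 0))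
  · exact ((stmt3_bigG T).curry.continuous.stronglyMeasurable).aestronglyMeasurable
  · filter_upwards with l using stmt3_gC_norm T l

/-- The function `x ↦ π / (2 √(1 + x²))` on the spectrum of `T`. -/
noncomputable def stmt3_wC (T : H →L[ℂ] H) : C(spectrum ℝ T, ℝ) :=
  ⟨fun x => π / (2 * Real.sqrt (1 + (x:ℝ)^2)), by
    apply Continuous.div continuous_const
    · fun_prop
    · intro x
      have : 0 < Real.sqrt (1 + (x:ℝ)^2) := Real.sqrt_pos.2 (by positivity)
      positivity⟩

lemma stmt3_gC_integral : ∫ l in Ici (0:ℝ), stmt3_gC T l = stmt3_wC T := by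
  ext x
  have h1 : (∫ l in Ici (0:ℝ), stmt3_gC T l) x = ∫ l in Ici (0:ℝ), stmt3_gC T l x :=
    ((ContinuousMap.evalCLM ℝ x).integral_comp_comm (stmt3_gC_int T)).symm
  rw [h1]
  have hx : (0:ℝ) < Real.sqrt (1 + (x:ℝ)^2) := Real.sqrt_pos.2 (by positivity)
  have hsq : (Real.sqrt (1 + (x:ℝ)^2))^2 = 1 + (x:ℝ)^2 := Real.sq_sqrt (by positivity)
  have h2 : (fun l : ℝ => stmt3_gC T l x)
      = fun l => ((Real.sqrt (1 + (x:ℝ)^2))^2 + l^2)⁻¹ := by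
    funext l
    rw [stmt3_gC_apply, hsq]; ring_nf
  rw [h2, stmt3_scalar hx]
  rfl

variable (hT : IsSelfAdjoint T)
include hT

lemma stmt3_uT_eq (l : ℝ) : (((1 + l ^ 2 : ℝ) : ℂ) • (1 : H →L[ℂ] H) + T ^ 2)
    = cfc (fun x : ℝ => 1 + l ^ 2 + x ^ 2) T := by
  have : cfc (fun x : ℝ => 1 + l ^ 2 + x ^ 2) T
      = cfc (fun _ : ℝ => 1 + l ^ 2) T + cfc (fun x : ℝ => x ^ 2) T := by
    rw [← cfc_add T _ _ (by fun_prop) (by fun_prop)]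
  rw [this, cfc_const _ T, cfc_pow_id T 2, Algebra.algebraMap_eq_smul_one,
    ← Complex.coe_smul]

omit hT in
lemma stmt3_contOn_inv (l : ℝ) :
    ContinuousOn (fun x : ℝ => (1+l^2+x^2)⁻¹) (spectrum ℝ T) :=
  ContinuousOn.inv₀ (by fun_prop) (fun x _ => by positivity)

lemma stmt3_u_mul_h (l : ℝ) : (((1 + l ^ 2 : ℝ) : ℂ) • (1 : H →L[ℂ] H) + T ^ 2) *
    cfc (fun x : ℝ => (1+l^2+x^2)⁻¹) T = 1 := by
  rw [stmt3_uT_eq T hT, ← cfc_mul _ _ T (by fun_prop) (stmt3_contOn_inv T l)]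
  calc cfc (fun x : ℝ => (1+l^2+x^2) * (1+l^2+x^2)⁻¹) T
      = cfc (fun _ : ℝ => (1:ℝ)) T := by
        apply cfc_congr; intro x hx; field_simp
    _ = 1 := cfc_const_one ℝ T

lemma stmt3_h_mul_u (l : ℝ) : cfc (fun x : ℝ => (1+l^2+x^2)⁻¹) T *
    (((1 + l ^ 2 : ℝ) : ℂ) • (1 : H →L[ℂ] H) + T ^ 2) = 1 := by
  rw [stmt3_uT_eq T hT, ← cfc_mul _ _ T (stmt3_contOn_inv T l) (by fun_prop)]
  calc cfc (fun x : ℝ => (1+l^2+x^2)⁻¹ * (1+l^2+x^2)) T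
      = cfc (fun _ : ℝ => (1:ℝ)) T := by
        apply cfc_congr; intro x hx; field_simp
    _ = 1 := cfc_const_one ℝ T

lemma stmt3_res3_eq (l : ℝ) :
    resolvent3 T l = cfc (fun x : ℝ => (1+l^2+x^2)⁻¹) T := by
  have : Ring.inverse ((⟨_, _, stmt3_u_mul_h T hT l, stmt3_h_mul_u T hT l⟩ :
      (H →L[ℂ] H)ˣ) : H →L[ℂ] H) = cfc (fun x : ℝ => (1+l^2+x^2)⁻¹) T := by
    rw [Ring.inverse_unit]; rfl
  exact this

lemma stmt3_res3_norm (l : ℝ) : ‖resolvent3 T l‖ ≤ (1+l^2)⁻¹ := by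
  rw [stmt3_res3_eq T hT l]
  apply norm_cfc_le (by positivity)
  intro x hx
  rw [Real.norm_eq_abs, abs_of_pos (by positivity)]
  exact inv_anti₀ (by positivity) (by nlinarith)

lemma stmt3_res3_cont : Continuous (resolvent3 T) := by
  rw [continuous_iff_continuousAt]
  intro l
  have hu : Continuous
      (fun l : ℝ => ((1 + l ^ 2 : ℝ) : ℂ) • (1 : H →L[ℂ] H) + T ^ 2) := by
    fun_prop
  exact ContinuousAt.comp (g := Ring.inverse)
    (f := fun l : ℝ => ((1 + l ^ 2 : ℝ) : ℂ) • (1 : H →L[ℂ] H) + T ^ 2) (x := l)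
    (NormedRing.inverse_continuousAt
      (⟨_, _, stmt3_u_mul_h T hT l, stmt3_h_mul_u T hT l⟩ : (H →L[ℂ] H)ˣ))
    hu.continuousAt

set_option synthInstance.maxHeartbeats 1000000 in
lemma stmt3_res3_int : IntegrableOn (resolvent3 T) (Ici 0) volume := by
  apply Integrable.mono' ((integrable_inv_one_add_sq).integrableOn (s := Ici 0))
  · exact (stmt3_res3_cont T hT).stronglyMeasurable.aestronglyMeasurable
  · filter_upwards with l using stmt3_res3_norm T hT l

/-- The continuous functional calculus of a self-adjoint `T` as a continuous
`ℝ`-linear map `C(σ(T), ℝ) →L[ℝ] B(H)`. -/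
noncomputable def stmt3_cfcL : C(spectrum ℝ T, ℝ) →L[ℝ] (H →L[ℂ] H) :=
  { toLinearMap := (cfcHom hT (R := ℝ)).toAlgHom.toLinearMap,
    cont := (cfcHom_isClosedEmbedding hT).continuous }

lemma stmt3_res3_eq_cfcL (l : ℝ) : resolvent3 T l = stmt3_cfcL T hT (stmt3_gC T l) := by
  rw [stmt3_res3_eq T hT l, cfc_apply _ T hT (stmt3_contOn_inv T l)]
  have : (⟨_, (stmt3_contOn_inv T l).restrict⟩ : C(spectrum ℝ T, ℝ)) = stmt3_gC T l := by
    ext x; rfl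
  rw [this]
  rfl

lemma stmt3_J : ∫ l in Ici (0:ℝ), resolvent3 T l = stmt3_cfcL T hT (stmt3_wC T) := by
  calc ∫ l in Ici (0:ℝ), resolvent3 T l
      = ∫ l in Ici (0:ℝ), stmt3_cfcL T hT (stmt3_gC T l) := by
        simp_rw [stmt3_res3_eq_cfcL T hT]
    _ = stmt3_cfcL T hT (∫ l in Ici (0:ℝ), stmt3_gC T l) :=
        (stmt3_cfcL T hT).integral_comp_comm (stmt3_gC_int T)
    _ = stmt3_cfcL T hT (stmt3_wC T) := by rw [stmt3_gC_integral T]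

omit hT in
lemma stmt3_f0_cont : ContinuousOn (fun x : ℝ => x / Real.sqrt (1 + x ^ 2))
    (spectrum ℝ T) := by
  apply Continuous.continuousOn
  apply Continuous.div continuous_id (by fun_prop)
  intro x
  have : 0 < Real.sqrt (1 + x^2) := Real.sqrt_pos.2 (by positivity)
  positivity

lemma stmt3_JT : stmt3_cfcL T hT (stmt3_wC T) * T
    = (π/2 : ℝ) • cfc (fun x : ℝ => x / Real.sqrt (1 + x ^ 2)) T := by
  have h1 : stmt3_cfcL T hT (stmt3_wC T) * T
      = cfcHom hT (R := ℝ) (stmt3_wC T * (ContinuousMap.id ℝ).restrict (spectrum ℝ T)) := by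
    rw [_root_.map_mul, cfcHom_id hT]
    rfl
  have h2 : stmt3_wC T * (ContinuousMap.id ℝ).restrict (spectrum ℝ T)
      = (π/2 : ℝ) • ⟨_, (stmt3_f0_cont T).restrict⟩ := by
    ext x
    have hx : (0:ℝ) < Real.sqrt (1 + (x:ℝ)^2) := Real.sqrt_pos.2 (by positivity)
    show π / (2 * Real.sqrt (1 + (x:ℝ)^2)) * (x:ℝ) = (π/2) * ((x:ℝ) / Real.sqrt (1 + (x:ℝ)^2))
    field_simp
  rw [h1, h2,
    cfc_apply (fun x : ℝ => x / Real.sqrt (1 + x ^ 2)) T hT (stmt3_f0_cont T)]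
  exact _root_.map_smul (cfcHom hT (R := ℝ)) _ _

lemma stmt3_TJ : T * stmt3_cfcL T hT (stmt3_wC T)
    = stmt3_cfcL T hT (stmt3_wC T) * T := by
  have hid : cfcHom hT (R := ℝ) ((ContinuousMap.id ℝ).restrict (spectrum ℝ T)) = T :=
    cfcHom_id hT
  calc T * stmt3_cfcL T hT (stmt3_wC T)
      = cfcHom hT ((ContinuousMap.id ℝ).restrict (spectrum ℝ T)) * cfcHom hT (stmt3_wC T) := by
        rw [hid]; rfl
    _ = cfcHom hT (stmt3_wC T) * cfcHom hT ((ContinuousMap.id ℝ).restrict (spectrum ℝ T)) := by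
        rw [← _root_.map_mul, ← _root_.map_mul, mul_comm]
    _ = stmt3_cfcL T hT (stmt3_wC T) * T := by rw [hid]; rfl

end Aux

set_option synthInstance.maxHeartbeats 1000000 in
set_option maxHeartbeats 1000000 in
/-- The commutator integral formula: for a bounded self-adjoint `T`, a bounded
operator `a`, `R_l = (1 + l² + T²)⁻¹` and `F = f(T)` with `f(x) = x / √(1 + x²)`,
the map `l ↦ R_l ((1 + l²)[T,a] + T [a,T] T) R_l` is Bochner integrable on `[0, ∞)`
and `[F, a] = (2/π) ∫₀^∞ R_l ((1 + l²)[T,a] + T [a,T] T) R_l dl`. -/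
theorem stmt3 {H : Type*} [NormedAddCommGroup H] [InnerProductSpace ℂ H] [CompleteSpace H]
    (T : H →L[ℂ] H) (hT : IsSelfAdjoint T) (a : H →L[ℂ] H) :
    IntegrableOn
      (fun l : ℝ =>
        resolvent3 T l *
          (((1 + l ^ 2 : ℝ) : ℂ) • (T * a - a * T) + T * (a * T - T * a) * T) *
          resolvent3 T l)
      (Set.Ici 0) volume ∧
    cfc (fun x : ℝ => x / Real.sqrt (1 + x ^ 2)) T * a -
        a * cfc (fun x : ℝ => x / Real.sqrt (1 + x ^ 2)) T =
      ((2 / Real.pi : ℝ) : ℂ) •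
        ∫ l in Set.Ici (0 : ℝ),
          resolvent3 T l *
            (((1 + l ^ 2 : ℝ) : ℂ) • (T * a - a * T) + T * (a * T - T * a) * T) *
            resolvent3 T l := by
  -- the key algebraic identity
  have key : ∀ l : ℝ,
      resolvent3 T l *
        (((1 + l ^ 2 : ℝ) : ℂ) • (T * a - a * T) + T * (a * T - T * a) * T) *
        resolvent3 T l
      = resolvent3 T l * (T * a) - (a * T) * resolvent3 T l := by
    intro l
    have hu1 : (((1 + l ^ 2 : ℝ) : ℂ) • (1 : H →L[ℂ] H) + T ^ 2) * resolvent3 T l = 1 := by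
      rw [stmt3_res3_eq T hT l]; exact stmt3_u_mul_h T hT l
    have hu2 : resolvent3 T l * (((1 + l ^ 2 : ℝ) : ℂ) • (1 : H →L[ℂ] H) + T ^ 2) = 1 := by
      rw [stmt3_res3_eq T hT l]; exact stmt3_h_mul_u T hT l
    have hM : ((1 + l ^ 2 : ℝ) : ℂ) • (T * a - a * T) + T * (a * T - T * a) * T
        = (T * a) * (((1 + l ^ 2 : ℝ) : ℂ) • (1 : H →L[ℂ] H) + T ^ 2)
          - (((1 + l ^ 2 : ℝ) : ℂ) • (1 : H →L[ℂ] H) + T ^ 2) * (a * T) := by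
      simp only [mul_add, add_mul, mul_sub, sub_mul, smul_sub, smul_mul_assoc,
        mul_smul_comm, mul_one, one_mul, pow_two, mul_assoc]
      abel
    rw [hM]
    calc resolvent3 T l *
          ((T * a) * (((1 + l ^ 2 : ℝ) : ℂ) • (1 : H →L[ℂ] H) + T ^ 2)
            - (((1 + l ^ 2 : ℝ) : ℂ) • (1 : H →L[ℂ] H) + T ^ 2) * (a * T)) * resolvent3 T l
        = resolvent3 T l * (T * a) *
            ((((1 + l ^ 2 : ℝ) : ℂ) • (1 : H →L[ℂ] H) + T ^ 2) * resolvent3 T l)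
          - (resolvent3 T l * (((1 + l ^ 2 : ℝ) : ℂ) • (1 : H →L[ℂ] H) + T ^ 2)) *
            ((a * T) * resolvent3 T l) := by
          simp only [mul_sub, sub_mul, mul_assoc]
      _ = resolvent3 T l * (T * a) - (a * T) * resolvent3 T l := by
          rw [hu1, hu2, mul_one, one_mul]
  have hfun : (fun l : ℝ =>
      resolvent3 T l *
        (((1 + l ^ 2 : ℝ) : ℂ) • (T * a - a * T) + T * (a * T - T * a) * T) *
        resolvent3 T l)
      = fun l : ℝ => resolvent3 T l * (T * a) - (a * T) * resolvent3 T l :=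
    funext key
  -- integrability
  have int1 : IntegrableOn (fun l : ℝ => resolvent3 T l * (T * a)) (Set.Ici 0) volume := by
    simpa [IntegrableOn] using
      (((ContinuousLinearMap.mul ℝ (H →L[ℂ] H)).flip (T * a)).integrable_comp (stmt3_res3_int T hT))
  have int2 : IntegrableOn (fun l : ℝ => (a * T) * resolvent3 T l) (Set.Ici 0) volume := by
    simpa [IntegrableOn] using
      ((ContinuousLinearMap.mul ℝ (H →L[ℂ] H) (a * T)).integrable_comp (stmt3_res3_int T hT))
  have hint : IntegrableOn
      (fun l : ℝ => resolvent3 T l * (T * a) - (a * T) * resolvent3 T l)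
      (Set.Ici 0) volume := int1.sub int2
  constructor
  · rw [hfun]; exact hint
  · rw [hfun]
    have e0 : ∫ l in Set.Ici (0:ℝ), (resolvent3 T l * (T * a) - (a * T) * resolvent3 T l)
        = (∫ l in Set.Ici (0:ℝ), resolvent3 T l * (T * a))
          - ∫ l in Set.Ici (0:ℝ), (a * T) * resolvent3 T l :=
      integral_sub int1 int2
    have e1 : ∫ l in Set.Ici (0:ℝ), resolvent3 T l * (T * a)
        = (∫ l in Set.Ici (0:ℝ), resolvent3 T l) * (T * a) := by
      simpa using
        (((ContinuousLinearMap.mul ℝ (H →L[ℂ] H)).flip (T * a)).integral_comp_comm (stmt3_res3_int T hT))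
    have e2 : ∫ l in Set.Ici (0:ℝ), (a * T) * resolvent3 T l
        = (a * T) * ∫ l in Set.Ici (0:ℝ), resolvent3 T l := by
      simpa using
        ((ContinuousLinearMap.mul ℝ (H →L[ℂ] H) (a * T)).integral_comp_comm (stmt3_res3_int T hT))
    rw [e0, e1, e2, stmt3_J T hT]
    set F := cfc (fun x : ℝ => x / Real.sqrt (1 + x ^ 2)) T with hF
    have hJT := stmt3_JT T hT
    have hTJ := stmt3_TJ T hT
    have h3 : stmt3_cfcL T hT (stmt3_wC T) * (T * a)
        = ((Real.pi/2 : ℝ) • F) * a := by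
      rw [← mul_assoc, hJT]
    have h4 : (a * T) * stmt3_cfcL T hT (stmt3_wC T)
        = a * ((Real.pi/2 : ℝ) • F) := by
      rw [mul_assoc, hTJ, hJT]
    rw [h3, h4, smul_mul_assoc, mul_smul_comm, ← smul_sub, Complex.coe_smul, smul_smul]
    have : (2 / Real.pi) * (Real.pi / 2) = 1 := by
      field_simp
    rw [this, one_smul]
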